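/- Let $W=(a_1,a_2,a_3;h)$ be a regular weight system and for $i=1,2,3$ write $h/a_i = p_i/q_i$ in lowest terms, $p_{ij} = \mathrm{lcm}(p_i,p_j)$, $p_{123} = \mathrm{lcm}(p_1,p_2,p_3)$. If $W$ is reduced (i.e. $\gcd(a_1,a_2,a_3,h)=1$) then $p_{123} = h$. -/

import Mathlib

theorem lcm_div_aux (n d₁ d₂ : ℕ) (hd₁ : 0 < d₁) (hd₂ : 0 < d₂)
    (h1 : d₁ ∣ n) (h2 : d₂ ∣ n) :
    Nat.lcm (n / d₁) (n / d₂) = n / Nat.gcd d₁ d₂ := by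
  set g := Nat.gcd d₁ d₂ with hg
  have hgpos : 0 < g := Nat.gcd_pos_of_pos_left _ hd₁
  have hgd₁ : g ∣ d₁ := Nat.gcd_dvd_left _ _
  have hgd₂ : g ∣ d₂ := Nat.gcd_dvd_right _ _
  have hgn : g ∣ n := hgd₁.trans h1
  set e₁ := d₁ / g with he₁
  set e₂ := d₂ / g with he₂
  have hd₁eq : d₁ = g * e₁ := (Nat.mul_div_cancel' hgd₁).symm
  have hd₂eq : d₂ = g * e₂ := (Nat.mul_div_cancel' hgd₂).symm
  have hcop : Nat.Coprime e₁ e₂ := Nat.coprime_div_gcd_div_gcd hgpos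
  set m := n / g with hm
  have he₁m : e₁ ∣ m := (Nat.dvd_div_iff_mul_dvd hgn).mpr (by rw [← hd₁eq]; exact h1)
  have he₂m : e₂ ∣ m := (Nat.dvd_div_iff_mul_dvd hgn).mpr (by rw [← hd₂eq]; exact h2)
  have hprod : e₁ * e₂ ∣ m := hcop.mul_dvd_of_dvd_of_dvd he₁m he₂m
  obtain ⟨k, hk⟩ := hprod
  have hn1 : n / d₁ = k * e₂ := by
    rw [hd₁eq, ← Nat.div_div_eq_div_mul, ← hm, hk]
    have : e₁ * e₂ * k = e₁ * (e₂ * k) := by ring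
    rw [this, Nat.mul_div_cancel_left _ (Nat.div_pos (Nat.le_of_dvd hd₁ hgd₁) hgpos), mul_comm]
  have hn2 : n / d₂ = k * e₁ := by
    rw [hd₂eq, ← Nat.div_div_eq_div_mul, ← hm, hk]
    have : e₁ * e₂ * k = e₂ * (e₁ * k) := by ring
    rw [this, Nat.mul_div_cancel_left _ (Nat.div_pos (Nat.le_of_dvd hd₂ hgd₂) hgpos), mul_comm]
  rw [hn1, hn2, Nat.lcm_mul_left, hcop.symm.lcm_eq_mul, hk]
  ring

theorem lcm_p_eq_h (h a₁ a₂ a₃ : ℕ)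
    (ha₁ : 0 < a₁) (ha₂ : 0 < a₂) (ha₃ : 0 < a₃)
    (h₁ : a₁ < h) (h₂ : a₂ < h) (h₃ : a₃ < h)
    (hred : Nat.gcd a₁ (Nat.gcd a₂ (Nat.gcd a₃ h)) = 1) :
    Nat.lcm (h / Nat.gcd h a₁) (Nat.lcm (h / Nat.gcd h a₂) (h / Nat.gcd h a₃)) = h := by
  have hh : 0 < h := lt_trans ha₁ h₁
  have hd₁ : 0 < Nat.gcd h a₁ := Nat.gcd_pos_of_pos_left _ hh
  have hd₂ : 0 < Nat.gcd h a₂ := Nat.gcd_pos_of_pos_left _ hh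
  have hd₃ : 0 < Nat.gcd h a₃ := Nat.gcd_pos_of_pos_left _ hh
  rw [lcm_div_aux h _ _ hd₂ hd₃ (Nat.gcd_dvd_left _ _) (Nat.gcd_dvd_left _ _),
      lcm_div_aux h _ _ hd₁ (Nat.gcd_pos_of_pos_left _ hd₂)
        (Nat.gcd_dvd_left _ _) ((Nat.gcd_dvd_left _ _).trans (Nat.gcd_dvd_left _ _))]
  have hone : Nat.gcd (Nat.gcd h a₁) (Nat.gcd (Nat.gcd h a₂) (Nat.gcd h a₃)) = 1 := by
    apply Nat.eq_one_of_dvd_one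
    rw [← hred]
    have d := Nat.gcd_dvd_right (Nat.gcd h a₁) (Nat.gcd (Nat.gcd h a₂) (Nat.gcd h a₃))
    have dh : Nat.gcd (Nat.gcd h a₁) (Nat.gcd (Nat.gcd h a₂) (Nat.gcd h a₃)) ∣ h :=
      (Nat.gcd_dvd_left _ _).trans (Nat.gcd_dvd_left _ _)
    have da₁ : Nat.gcd (Nat.gcd h a₁) (Nat.gcd (Nat.gcd h a₂) (Nat.gcd h a₃)) ∣ a₁ := (Nat.gcd_dvd_left _ _).trans (Nat.gcd_dvd_right _ _)
    have da₂ : Nat.gcd (Nat.gcd h a₁) (Nat.gcd (Nat.gcd h a₂) (Nat.gcd h a₃)) ∣ a₂ := d.trans ((Nat.gcd_dvd_left _ _).trans (Nat.gcd_dvd_right _ _))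
    have da₃ : Nat.gcd (Nat.gcd h a₁) (Nat.gcd (Nat.gcd h a₂) (Nat.gcd h a₃)) ∣ a₃ := d.trans ((Nat.gcd_dvd_right _ _).trans (Nat.gcd_dvd_right _ _))
    exact Nat.dvd_gcd da₁ (Nat.dvd_gcd da₂ (Nat.dvd_gcd da₃ dh))
  rw [hone, Nat.div_one]
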